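/- Let k and ℓ be positive integers, let E, D, F be Young diagrams with r(E) ≤ k, r(D) ≤ k and r(F) ≤ k+ℓ, and let A, B ∈ (ℤ_{≥0})^ℓ and C ∈ (ℤ_{≥0})^{ℓ(ℓ−1)/2}. Then the number of f ∈ Ω(k,ℓ) with f_{−ℓ} = D, f_0 = E, f_ℓ = F, A(f) = A, B(f) = B and C(f) = C equals K_{F/E,A} · K_{D/E,B}. -/

import Mathlib

open MvPolynomial TensorProduct
open scoped Classical

noncomputable section

namespace Pieri

/-! ### Young diagrams and skew Kostka numbers.

A Young diagram is encoded as a finitely supported function `D : ℕ →₀ ℕ`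
(0-indexed: `D i` is the length of row `i+1`), weakly decreasing. -/

def IsYoung (D : ℕ →₀ ℕ) : Prop := ∀ i, D (i + 1) ≤ D i

/-- `|D|`, the number of boxes. -/
def ysize (D : ℕ →₀ ℕ) : ℕ := D.sum fun _ e => e

/-- `Interlaces A B` : `A ⊒ B`, i.e. `a_j ≥ b_j ≥ a_{j+1}` for all `j`. -/
def Interlaces (A B : ℕ →₀ ℕ) : Prop := ∀ j, B j ≤ A j ∧ A (j + 1) ≤ B j

/-- Semistandard skew tableau of shape `F/E` with entries in `{1,…,m}` and content `M`.
The filling `T` is normalized to be `0` outside the boxes of `F/E`. -/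
def IsSkewSSYT (E F : ℕ →₀ ℕ) (m : ℕ) (M : Fin m → ℕ) (T : ℕ × ℕ → ℕ) : Prop :=
  (∀ i, E i ≤ F i) ∧
  (∀ i j, E i ≤ j → j < F i → 1 ≤ T (i, j) ∧ T (i, j) ≤ m) ∧
  (∀ i j, ¬(E i ≤ j ∧ j < F i) → T (i, j) = 0) ∧
  (∀ i j, E i ≤ j → j + 1 < F i → T (i, j) ≤ T (i, j + 1)) ∧
  (∀ i j, E i ≤ j → j < F i → E (i + 1) ≤ j → j < F (i + 1) → T (i, j) < T (i + 1, j)) ∧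
  (∀ r : Fin m, Set.ncard {c : ℕ × ℕ | E c.1 ≤ c.2 ∧ c.2 < F c.1 ∧ T c = (r : ℕ) + 1} = M r)

/-- The skew Kostka number `K_{F/E, M}`. -/
def kostka (E F : ℕ →₀ ℕ) (m : ℕ) (M : Fin m → ℕ) : ℕ :=
  Set.ncard {T : ℕ × ℕ → ℕ | IsSkewSSYT E F m M T}

/-! ### The posets `Γ(k,ℓ)` and `Γ̃(k,ℓ)` and the lattice cone `Ω(k,ℓ)`. -/

/-- Ambient type containing `Γ̃(k,ℓ)`: `Sum.inl (i,j)` encodes `γ_j^(i)`,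
`Sum.inr (s,t)` encodes `ε_{s,t}`. -/
abbrev GammaAmb : Type := (ℤ × ℕ) ⊕ (ℕ × ℕ)

def gammaSet (k l : ℕ) : Set (ℤ × ℕ) :=
  {p | -(l : ℤ) ≤ p.1 ∧ p.1 ≤ (l : ℤ) ∧ 1 ≤ p.2 ∧ (p.2 : ℤ) ≤ (k : ℤ) + max 0 p.1}

def epsSet (l : ℕ) : Set (ℕ × ℕ) := {p | 1 ≤ p.1 ∧ p.1 < p.2 ∧ p.2 ≤ l}

def gammaTildeSet (k l : ℕ) : Set GammaAmb :=
  Sum.inl '' gammaSet k l ∪ Sum.inr '' epsSet l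

/-- One-step generating relations of the partial order of `Γ(k,ℓ)`:
`gammaStep k l a b` means "`a ≥ b`" is one of the defining relations. -/
def gammaStep (k l : ℕ) : ℤ × ℕ → ℤ × ℕ → Prop := fun a b =>
  (∃ i j : ℕ, i < l ∧ 1 ≤ j ∧ j ≤ k + i ∧ a = ((i : ℤ) + 1, j) ∧ b = ((i : ℤ), j)) ∨
  (∃ i j : ℕ, i < l ∧ 1 ≤ j ∧ j ≤ k + i ∧ a = ((i : ℤ), j) ∧ b = ((i : ℤ) + 1, j + 1)) ∨
  (∃ i j : ℕ, i < l ∧ 1 ≤ j ∧ j ≤ k ∧ a = (-(i : ℤ) - 1, j) ∧ b = (-(i : ℤ), j)) ∨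
  (∃ i j : ℕ, i < l ∧ 1 ≤ j ∧ j + 1 ≤ k ∧ a = (-(i : ℤ), j) ∧ b = (-(i : ℤ) - 1, j + 1))

/-- `gammaGE k l a b` : `a ≥ b` in the partial order of `Γ(k,ℓ)` generated by the relations. -/
def gammaGE (k l : ℕ) : ℤ × ℕ → ℤ × ℕ → Prop := Relation.ReflTransGen (gammaStep k l)

/-- `tildeGE k l a b` : `a ≥ b` in `Γ̃(k,ℓ)`; each `ε_{s,t}` is comparable only with itself. -/
def tildeGE (k l : ℕ) : GammaAmb → GammaAmb → Prop := fun a b =>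
  (∃ p q, a = Sum.inl p ∧ b = Sum.inl q ∧ gammaGE k l p q) ∨ a = b

/-- `Ω(k,ℓ)`, the additive monoid of order-preserving functions `Γ̃(k,ℓ) → ℤ_{≥0}`,
encoded as functions on the ambient type vanishing outside `Γ̃(k,ℓ)`. -/
def OmegaM (k l : ℕ) : AddSubmonoid (GammaAmb → ℕ) where
  carrier := {f | (∀ a b, tildeGE k l a b → f b ≤ f a) ∧
    ∀ p, p ∉ gammaTildeSet k l → f p = 0}
  add_mem' := by
    rintro f g ⟨hf1, hf2⟩ ⟨hg1, hg2⟩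
    refine ⟨fun a b h => add_le_add (hf1 a b h) (hg1 a b h), fun p hp => ?_⟩
    simp [Pi.add_apply, hf2 p hp, hg2 p hp]
  zero_mem' := ⟨fun _ _ _ => le_rfl, fun _ _ => rfl⟩

def Omega (k l : ℕ) : Set (GammaAmb → ℕ) := OmegaM k l

/-- `f_{i,j}` as an integer. -/
def fval (f : GammaAmb → ℕ) (i : ℤ) (j : ℕ) : ℤ := (f (Sum.inl (i, j)) : ℤ)

/-- `A_j(f)`. -/
def Afun (k : ℕ) (f : GammaAmb → ℕ) (j : ℕ) : ℤ :=
  (∑ a ∈ Finset.Icc 1 (k + j), fval f (j : ℤ) a)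
    - ∑ b ∈ Finset.Icc 1 (k + j - 1), fval f ((j : ℤ) - 1) b

/-- `B_j(f)`. -/
def Bfun (k : ℕ) (f : GammaAmb → ℕ) (j : ℕ) : ℤ :=
  ∑ a ∈ Finset.Icc 1 k, (fval f (-(j : ℤ)) a - fval f (-(j : ℤ) + 1) a)

/-- `P_j(f)`. -/
def Pfun (k l : ℕ) (f : GammaAmb → ℕ) (j : ℕ) : ℤ :=
  Afun k f j + Bfun k f j + (∑ a ∈ Finset.Ico 1 j, (f (Sum.inr (a, j)) : ℤ))
    + ∑ b ∈ Finset.Icc (j + 1) l, (f (Sum.inr (j, b)) : ℤ)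

/-- `Ω_{F,D,P}` : the elements `f ∈ Ω(k,ℓ)` with `f_{-ℓ} = D`, `f_ℓ = F` and `P(f) = P`. -/
def OmegaFDP (k l : ℕ) (D F : ℕ →₀ ℕ) (P : Fin l → ℕ) : Set (GammaAmb → ℕ) :=
  {f ∈ Omega k l |
    (∀ a : ℕ, 1 ≤ a → a ≤ k → f (Sum.inl (-(l : ℤ), a)) = D (a - 1)) ∧
    (∀ a : ℕ, 1 ≤ a → a ≤ k + l → f (Sum.inl ((l : ℤ), a)) = F (a - 1)) ∧
    (∀ j : Fin l, Pfun k l f ((j : ℕ) + 1) = (P j : ℤ))}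

/-- `S(A,B,C)`. -/
def Scomb (l : ℕ) (A B : Fin l → ℕ) (C : ℕ × ℕ → ℕ) : Fin l → ℕ := fun i =>
  A i + B i + (∑ s ∈ Finset.Ico 1 ((i : ℕ) + 1), C (s, (i : ℕ) + 1))
    + ∑ t ∈ Finset.Icc ((i : ℕ) + 2) l, C ((i : ℕ) + 1, t)

/-! ### Increasing subsets -/

/-- The sequence `a_i` attached to `(c, I, J)`. -/
def aSeq (c : ℕ) (I J : Finset ℕ) (i : ℤ) : ℕ :=
  if 0 ≤ i then c + (J ∩ Finset.Icc 1 i.toNat).card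
  else c + (I ∩ Finset.Icc 1 (-i).toNat).card

/-- The increasing subset `A_{(c,I,J)}` of `Γ(k,ℓ)`. -/
def Acij (l c : ℕ) (I J : Finset ℕ) : Set (ℤ × ℕ) :=
  {p | -(l : ℤ) ≤ p.1 ∧ p.1 ≤ (l : ℤ) ∧ 1 ≤ p.2 ∧ p.2 ≤ aSeq c I J p.1}

/-- The increasing subset `A_{(c,I,J)} ∪ Z` of `Γ̃(k,ℓ)`. -/
def AcijT (l c : ℕ) (I J : Finset ℕ) (Z : Finset (ℕ × ℕ)) : Set GammaAmb :=
  Sum.inl '' Acij l c I J ∪ Sum.inr '' (Z : Set (ℕ × ℕ))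

def IsIncreasingG (k l : ℕ) (A : Set (ℤ × ℕ)) : Prop :=
  A ⊆ gammaSet k l ∧ ∀ a ∈ A, ∀ x ∈ gammaSet k l, gammaGE k l x a → x ∈ A

def IsIncreasingT (k l : ℕ) (A : Set GammaAmb) : Prop :=
  A ⊆ gammaTildeSet k l ∧ ∀ a ∈ A, ∀ x ∈ gammaTildeSet k l, tildeGE k l x a → x ∈ A

/-- Characteristic function `χ_A`. -/
def chiInd (A : Set GammaAmb) : GammaAmb → ℕ := A.indicator fun _ => 1

/-! ### The polynomial algebra `P_{n,k,ℓ}` and the action of `U_n × U_k` -/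

/-- Index type for the variables of `P_{n,k,ℓ}` (all indices 0-based):
`inl (i,j) ↦ x_{i+1,j+1}`, `inr (inl (i,j)) ↦ y_{i+1,j+1}`,
`inr (inr (inl (i,j))) ↦ r_{i+1,k+j+1}`, `inr (inr (inr ((s,t),_))) ↦ r_{k+s+1,k+t+1}`. -/
abbrev VarIdx (n k l : ℕ) : Type :=
  (Fin n × Fin k) ⊕ (Fin n × Fin l) ⊕ (Fin k × Fin l) ⊕ {p : Fin l × Fin l // p.1 < p.2}

abbrev PRing (n k l : ℕ) : Type := MvPolynomial (VarIdx n k l) ℂ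

/-- The variable `x_{i,j}` (1-based indices). -/
def xP (n k l : ℕ) (i j : ℕ) : PRing n k l :=
  if h : 1 ≤ i ∧ i ≤ n ∧ 1 ≤ j ∧ j ≤ k then
    X (Sum.inl (⟨i - 1, by omega⟩, ⟨j - 1, by omega⟩)) else 0

/-- The variable `y_{i,j}` (1-based indices). -/
def yP (n k l : ℕ) (i j : ℕ) : PRing n k l :=
  if h : 1 ≤ i ∧ i ≤ n ∧ 1 ≤ j ∧ j ≤ l then
    X (Sum.inr (Sum.inl (⟨i - 1, by omega⟩, ⟨j - 1, by omega⟩))) else 0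

/-- The variable `r_{i,k+j}` (1-based `i ≤ k`, `j ≤ l`). -/
def rP (n k l : ℕ) (i j : ℕ) : PRing n k l :=
  if h : 1 ≤ i ∧ i ≤ k ∧ 1 ≤ j ∧ j ≤ l then
    X (Sum.inr (Sum.inr (Sum.inl (⟨i - 1, by omega⟩, ⟨j - 1, by omega⟩)))) else 0

/-- The variable `r_{k+s,k+t}` (1-based, `1 ≤ s < t ≤ l`). -/
def sP (n k l : ℕ) (s t : ℕ) : PRing n k l :=
  if h : 1 ≤ s ∧ s < t ∧ t ≤ l then
    X (Sum.inr (Sum.inr (Sum.inr ⟨(⟨s - 1, by omega⟩, ⟨t - 1, by omega⟩),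
      by exact Fin.mk_lt_mk.mpr (by omega)⟩))) else 0

/-- Upper triangular unipotent matrices. -/
def IsUU {m : ℕ} (g : Matrix (Fin m) (Fin m) ℂ) : Prop :=
  (∀ i, g i i = 1) ∧ ∀ i j : Fin m, j < i → g i j = 0

/-- The action of a pair of matrices `(g,h)` on `P_{n,k,ℓ}`:
`x_{i,j} ↦ (gᵀXh)_{i,j}`, `y_{i,j} ↦ (gᵀY_j)_i`, `r_{i,k+j} ↦ (hᵀR_j)_i`,
`r_{k+s,k+t} ↦ r_{k+s,k+t}`. -/
def uAct (n k l : ℕ) (g : Matrix (Fin n) (Fin n) ℂ) (h : Matrix (Fin k) (Fin k) ℂ) :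
    PRing n k l →ₐ[ℂ] PRing n k l :=
  aeval fun v => match v with
    | Sum.inl (i, j) => ∑ a : Fin n, ∑ b : Fin k, C (g a i * h b j) * X (Sum.inl (a, b))
    | Sum.inr (Sum.inl (i, j)) => ∑ a : Fin n, C (g a i) * X (Sum.inr (Sum.inl (a, j)))
    | Sum.inr (Sum.inr (Sum.inl (i, j))) =>
        ∑ b : Fin k, C (h b i) * X (Sum.inr (Sum.inr (Sum.inl (b, j))))
    | Sum.inr (Sum.inr (Sum.inr st)) => X (Sum.inr (Sum.inr (Sum.inr st)))

/-- The Pieri algebra `𝔄_{n,k,ℓ} = (P_{n,k,ℓ})^{U_n × U_k}`. -/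
def invariants (n k l : ℕ) : Subalgebra ℂ (PRing n k l) where
  carrier := {f | ∀ g h, IsUU g → IsUU h → uAct n k l g h f = f}
  mul_mem' := by
    intro a b ha hb g h hg hh
    rw [map_mul, ha g h hg hh, hb g h hg hh]
  add_mem' := by
    intro a b ha hb g h hg hh
    rw [map_add, ha g h hg hh, hb g h hg hh]
  one_mem' := fun g h _ _ => map_one _
  zero_mem' := fun g h _ _ => map_zero _
  algebraMap_mem' := fun c g h _ _ => (uAct _ _ _ g h).commutes c

/-! ### The graded lexicographic order -/

/-- Rank of a variable: smaller rank = bigger variable in the order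
`x_{1,1} > x_{2,1} > ⋯ > x_{n,k} > y_{1,1} > ⋯ > y_{n,ℓ} > r_{1,k+1} > ⋯ > r_{k,k+ℓ}
> r_{k+1,k+2} > r_{k+1,k+3} > r_{k+2,k+3} > ⋯ > r_{k+ℓ-1,k+ℓ}`. -/
def vrank (n k l : ℕ) : VarIdx n k l → ℕ
  | Sum.inl (i, j) => j.val * n + i.val
  | Sum.inr (Sum.inl (i, j)) => n * k + j.val * n + i.val
  | Sum.inr (Sum.inr (Sum.inl (i, j))) => n * k + n * l + j.val * k + i.val
  | Sum.inr (Sum.inr (Sum.inr ⟨(s, t), _⟩)) =>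
      n * k + n * l + k * l + t.val * (t.val - 1) / 2 + s.val

/-- Total degree of an exponent vector. -/
def mdeg {n k l : ℕ} (α : VarIdx n k l →₀ ℕ) : ℕ := α.sum fun _ e => e

/-- `grlexLT n k l α β` : the monomial `x^α` is smaller than `x^β` in the graded
lexicographic order. -/
def grlexLT (n k l : ℕ) (α β : VarIdx n k l →₀ ℕ) : Prop :=
  mdeg α < mdeg β ∨ (mdeg α = mdeg β ∧
    ∃ v, α v < β v ∧ ∀ w, vrank n k l w < vrank n k l v → α w = β w)

/-- `IsLeadMon n k l f α` : `x^α` is the leading monomial of `f`. -/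
def IsLeadMon (n k l : ℕ) (f : PRing n k l) (α : VarIdx n k l →₀ ℕ) : Prop :=
  α ∈ f.support ∧ ∀ β ∈ f.support, β ≠ α → grlexLT n k l β α

/-! ### The determinants `η_{(c,I,J)}` -/

/-- The determinant `η_{(c,I,J)}`. -/
def eta (n k l : ℕ) (c : ℕ) (I J : Finset ℕ) : PRing n k l :=
  Matrix.det (Matrix.of fun a b : Fin (c + I.card + J.card) =>
    if a.val < c + J.card then
      if b.val < c + I.card then xP n k l (a.val + 1) (b.val + 1)
      else yP n k l (a.val + 1) ((J.sort (· ≤ ·)).getD (b.val - (c + I.card)) 0)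
    else
      if b.val < c + I.card then
        rP n k l (b.val + 1) ((I.sort (· ≤ ·)).getD (a.val - (c + J.card)) 0)
      else 0)

/-- `η_{χ_B}` for `B = A_{(c,I,J)} ∪ Z`. -/
def etaChi (n k l : ℕ) (c : ℕ) (I J : Finset ℕ) (Z : Finset (ℕ × ℕ)) : PRing n k l :=
  eta n k l c I J * ∏ p ∈ Z, sP n k l p.1 p.2

/-- `IsEtaOf n k l g q` : `q = ∏_j η_{χ_{A_j}}^{c_j}` for some expression
`g = ∑_j c_j χ_{A_j}` with `A_1 ⊆ ⋯ ⊆ A_N` a chain of increasing subsets of `Γ̃(k,ℓ)`. -/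
def IsEtaOf (n k l : ℕ) (g : GammaAmb → ℕ) (q : PRing n k l) : Prop :=
  ∃ (N : ℕ) (co : Fin N → ℕ) (A : Fin N → Set GammaAmb) (fac : Fin N → PRing n k l),
    (∀ j, IsIncreasingT k l (A j)) ∧
    (∀ j j' : Fin N, j ≤ j' → A j ⊆ A j') ∧
    (g = ∑ j : Fin N, co j • chiInd (A j)) ∧
    (∀ j, ∃ (c : ℕ) (I J : Finset ℕ) (Z : Finset (ℕ × ℕ)),
      c ≤ k ∧ I ⊆ Finset.Icc 1 l ∧ J ⊆ Finset.Icc 1 l ∧ I.card ≤ k - c ∧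
      (↑Z : Set (ℕ × ℕ)) ⊆ epsSet l ∧ A j = AcijT l c I J Z ∧
      fac j = etaChi n k l c I J Z) ∧
    q = ∏ j : Fin N, fac j ^ co j

/-- The monomial `m(g)` attached to `g ∈ Ω(k,ℓ)`. -/
def mOf (n k l : ℕ) (g : GammaAmb → ℕ) : PRing n k l :=
  (∏ u ∈ Finset.Icc 1 k, xP n k l u u ^ g (Sum.inl ((0 : ℤ), u)))
  * (∏ b ∈ Finset.Icc 1 l, ∏ a ∈ Finset.Icc 1 (k + b),
      yP n k l a b ^ (g (Sum.inl ((b : ℤ), a)) - g (Sum.inl ((b : ℤ) - 1, a))))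
  * (∏ j ∈ Finset.Icc 1 l, ∏ i ∈ Finset.Icc 1 k,
      rP n k l i j ^ (g (Sum.inl (-(j : ℤ), i)) - g (Sum.inl (-(j : ℤ) + 1, i))))
  * (∏ t ∈ Finset.Icc 1 l, ∏ s ∈ Finset.Ico 1 t, sP n k l s t ^ g (Sum.inr (s, t)))

/-! ### The homogeneous components `E_{F,D,P}` -/

/-- `f` is homogeneous of degree `d` in the set `S` of variables. -/
def HomogOn (n k l : ℕ) (f : PRing n k l) (S : Set (VarIdx n k l)) (d : ℕ) : Prop :=
  ∀ α ∈ f.support, (∑ v ∈ α.support, S.indicator (fun w => α w) v) = d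

/-- The variables `x_{i,1},…,x_{i,k}, y_{i,1},…,y_{i,ℓ}` (1-based `i`). -/
def rowSet (n k l : ℕ) (i : ℕ) : Set (VarIdx n k l) :=
  {v | match v with
    | Sum.inl (a, _) => (a : ℕ) + 1 = i
    | Sum.inr (Sum.inl (a, _)) => (a : ℕ) + 1 = i
    | _ => False}

/-- The variables `x_{1,j},…,x_{n,j}, r_{j,k+1},…,r_{j,k+ℓ}` (1-based `j`). -/
def colSet (n k l : ℕ) (j : ℕ) : Set (VarIdx n k l) :=
  {v | match v with
    | Sum.inl (_, b) => (b : ℕ) + 1 = j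
    | Sum.inr (Sum.inr (Sum.inl (b, _))) => (b : ℕ) + 1 = j
    | _ => False}

/-- The variables `y_{1,t},…,y_{n,t}, r_{1,k+t},…,r_{k,k+t}`, `r_{k+s,k+t} (s<t)`,
`r_{k+t,k+t'} (t<t')` (1-based `t`). -/
def tSet (n k l : ℕ) (t : ℕ) : Set (VarIdx n k l) :=
  {v | match v with
    | Sum.inr (Sum.inl (_, b)) => (b : ℕ) + 1 = t
    | Sum.inr (Sum.inr (Sum.inl (_, b))) => (b : ℕ) + 1 = t
    | Sum.inr (Sum.inr (Sum.inr ⟨(s, u), _⟩)) => (s : ℕ) + 1 = t ∨ (u : ℕ) + 1 = t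
    | _ => False}

theorem homogOn_add {n k l : ℕ} {f g : PRing n k l} {S : Set (VarIdx n k l)} {d : ℕ}
    (hf : HomogOn n k l f S d) (hg : HomogOn n k l g S d) : HomogOn n k l (f + g) S d := by
  intro α hα
  by_cases h : α ∈ f.support
  · exact hf α h
  · refine hg α ?_
    by_contra hg'
    refine MvPolynomial.mem_support_iff.mp hα ?_
    rw [MvPolynomial.coeff_add, MvPolynomial.notMem_support_iff.mp h,
      MvPolynomial.notMem_support_iff.mp hg', add_zero]

/-- The homogeneous component `E_{F,D,P}` of `𝔄_{n,k,ℓ}`. -/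
def Esub (n k l : ℕ) (F D : ℕ →₀ ℕ) (Pv : Fin l → ℕ) : Submodule ℂ (PRing n k l) where
  carrier := {f | f ∈ invariants n k l ∧
    (∀ i : ℕ, 1 ≤ i → i ≤ n → HomogOn n k l f (rowSet n k l i) (F (i - 1))) ∧
    (∀ j : ℕ, 1 ≤ j → j ≤ k → HomogOn n k l f (colSet n k l j) (D (j - 1))) ∧
    (∀ t : Fin l, HomogOn n k l f (tSet n k l ((t : ℕ) + 1)) (Pv t))}
  add_mem' := by
    rintro f g ⟨hf0, hf1, hf2, hf3⟩ ⟨hg0, hg1, hg2, hg3⟩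
    exact ⟨add_mem hf0 hg0,
      fun i h1 h2 => homogOn_add (hf1 i h1 h2) (hg1 i h1 h2),
      fun j h1 h2 => homogOn_add (hf2 j h1 h2) (hg2 j h1 h2),
      fun t => homogOn_add (hf3 t) (hg3 t)⟩
  zero_mem' := by
    refine ⟨zero_mem _, fun i _ _ α hα => ?_, fun j _ _ α hα => ?_, fun t α hα => ?_⟩ <;>
      simp at hα
  smul_mem' := by
    rintro c f ⟨hf0, hf1, hf2, hf3⟩
    refine ⟨(invariants n k l).smul_mem hf0 c,
      fun i h1 h2 α hα => hf1 i h1 h2 α (MvPolynomial.support_smul hα),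
      fun j h1 h2 α hα => hf2 j h1 h2 α (MvPolynomial.support_smul hα),
      fun t α hα => hf3 t α (MvPolynomial.support_smul hα)⟩

/-- The set of leading monomials of nonzero elements of `𝔄_{n,k,ℓ}`
(as monic monomial polynomials). -/
def LMset (n k l : ℕ) : Set (PRing n k l) :=
  {m | ∃ f ∈ invariants n k l, ∃ α, IsLeadMon n k l f α ∧
    m = MvPolynomial.monomial α (1 : ℂ)}


/-! ### Block for Statement 1 : the quotient `𝒫(M_{n,k+ℓ})/J` -/

abbrev QRing (n m : ℕ) : Type := MvPolynomial (Fin n × Fin m) ℂ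

/-- `r_{i,j} = ∑_{a=1}^n x_{a,i} x_{n-a+1,j}`. -/
def rQ (n m : ℕ) (i j : Fin m) : QRing n m := ∑ a : Fin n, X (a, i) * X (a.rev, j)

/-- The ideal `J` generated by `{r_{i,j} : 1 ≤ i,j ≤ k} ∪ {r_{k+j,k+j} : 1 ≤ j ≤ ℓ}`. -/
def JId (n k l : ℕ) : Ideal (QRing n (k + l)) :=
  Ideal.span ({p | ∃ i j : Fin (k + l), (i : ℕ) < k ∧ (j : ℕ) < k ∧ p = rQ n (k + l) i j} ∪
    {p | ∃ j : Fin (k + l), k ≤ (j : ℕ) ∧ p = rQ n (k + l) j j})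

/-- The substitution `x_{i,j} ↦ (g⁻¹ X h)_{i,j}` on `𝒫(M_{n,m})`. -/
def actQ (n m : ℕ) (g : Matrix (Fin n) (Fin n) ℂ) (h : Matrix (Fin m) (Fin m) ℂ) :
    QRing n m →ₐ[ℂ] QRing n m :=
  aeval fun p => ∑ a : Fin n, ∑ b : Fin m, C (g⁻¹ p.1 a * h b p.2) * X (a, b)

/-- The matrix of the symmetric bilinear form `⟨u,v⟩ = ∑ u_a v_{n-a+1}`. -/
def flipMat (n : ℕ) : Matrix (Fin n) (Fin n) ℂ := fun i j => if j = i.rev then 1 else 0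

/-- `g ∈ SO_n` : `g` preserves the form and has determinant 1. -/
def IsSO (n : ℕ) (g : Matrix (Fin n) (Fin n) ℂ) : Prop :=
  g.transpose * flipMat n * g = flipMat n ∧ g.det = 1

/-- `diag(h, 1_ℓ)`, the embedding of `GL_k` into `GL_{k+ℓ}`. -/
def embedU (k l : ℕ) (h : Matrix (Fin k) (Fin k) ℂ) : Matrix (Fin (k + l)) (Fin (k + l)) ℂ :=
  fun i j =>
    if hij : (i : ℕ) < k ∧ (j : ℕ) < k then h ⟨i.val, hij.1⟩ ⟨j.val, hij.2⟩
    else if i = j then 1 else 0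

/-- The invariants `(𝒫(M_{n,k+ℓ})/J)^{U_{SO_n} × U_k}` (invariance tested on every
representative). -/
def SqSet (n k l : ℕ) : Set (QRing n (k + l) ⧸ JId n k l) :=
  {q | ∀ (g : Matrix (Fin n) (Fin n) ℂ) (h : Matrix (Fin k) (Fin k) ℂ),
      IsUU g → IsSO n g → IsUU h →
      ∀ f : QRing n (k + l), Ideal.Quotient.mk (JId n k l) f = q →
        Ideal.Quotient.mk (JId n k l) (actQ n (k + l) g (embedU k l h) f) = q}

/-! ### Block for Statement 16 : the `Sp_{2n}` Pieri algebra -/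

abbrev QSp (n k : ℕ) : Type := MvPolynomial (Fin (2 * n) × Fin k) ℂ
abbrev YRing (n l : ℕ) : Type := MvPolynomial (Fin (2 * n) × Fin l) ℂ

/-- The matrix of the symplectic form `(u,v) = ∑_{a=1}^n (u_a v_{2n+1-a} - u_{2n+1-a} v_a)`. -/
def symplMat (n : ℕ) : Matrix (Fin (2 * n)) (Fin (2 * n)) ℂ :=
  fun i j => if j = i.rev then (if (i : ℕ) < n then 1 else -1) else 0

def IsSp (n : ℕ) (g : Matrix (Fin (2 * n)) (Fin (2 * n)) ℂ) : Prop :=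
  g.transpose * symplMat n * g = symplMat n

/-- The substitution `x_{i,j} ↦ (gᵀ T h)_{i,j}` on `𝒫(M_{2n,k})`. -/
def actSp (n k : ℕ) (g : Matrix (Fin (2 * n)) (Fin (2 * n)) ℂ)
    (h : Matrix (Fin k) (Fin k) ℂ) : QSp n k →ₐ[ℂ] QSp n k :=
  aeval fun p => ∑ a : Fin (2 * n), ∑ b : Fin k, C (g a p.1 * h b p.2) * X (a, b)

/-- The substitution `y_{i,j} ↦ (gᵀ Y_j)_i` on `𝒫(ℂ_1^{2n}) ⊗ ⋯ ⊗ 𝒫(ℂ_ℓ^{2n})`. -/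
def actY (n l : ℕ) (g : Matrix (Fin (2 * n)) (Fin (2 * n)) ℂ) : YRing n l →ₐ[ℂ] YRing n l :=
  aeval fun p => ∑ a : Fin (2 * n), C (g a p.1) * X (a, p.2)

/-- The ideal `I_{2n,k}` generated by all `Sp_{2n}`-invariants with zero constant term. -/
def ISp (n k : ℕ) : Ideal (QSp n k) :=
  Ideal.span {f | (∀ g, IsSp n g → actSp n k g 1 f = f) ∧ MvPolynomial.constantCoeff f = 0}

/-- The canonical surjection `𝒫(M_{2n,k}) ⊗ 𝒫(ℂ^{2n})^{⊗ℓ} → (𝒫(M_{2n,k})/I_{2n,k}) ⊗ ⋯`. -/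
def PsiSp (n k l : ℕ) : (QSp n k ⊗[ℂ] YRing n l) →ₐ[ℂ] ((QSp n k ⧸ ISp n k) ⊗[ℂ] YRing n l) :=
  Algebra.TensorProduct.map (Ideal.Quotient.mkₐ ℂ (ISp n k)) (AlgHom.id ℂ (YRing n l))

/-- The `Sp_{2n}` Pieri algebra `𝒜_{n,k,ℓ}`, as the set of elements of
`(𝒫(M_{2n,k})/I_{2n,k}) ⊗ 𝒫(ℂ_1^{2n}) ⊗ ⋯ ⊗ 𝒫(ℂ_ℓ^{2n})` fixed by `U_{Sp_{2n}} × U_k`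
(invariance tested on every representative). -/
def ASpSet (n k l : ℕ) : Set ((QSp n k ⧸ ISp n k) ⊗[ℂ] YRing n l) :=
  {t | ∀ (g : Matrix (Fin (2 * n)) (Fin (2 * n)) ℂ) (h : Matrix (Fin k) (Fin k) ℂ),
      IsSp n g → IsUU g → IsUU h →
      ∀ w : QSp n k ⊗[ℂ] YRing n l, PsiSp n k l w = t →
        PsiSp n k l (Algebra.TensorProduct.map (actSp n k g h) (actY n l g) w) = t}


/-! ### Block for Statement 15 : flat families -/

/-- A flat `ℂ[t]`-algebra with general fibre `𝔄_{n,k,ℓ}` and special fibre `ℂ[Ω(k,ℓ)]`. -/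
structure FlatFam (n k l : ℕ) : Type 1 where
  R : Type
  [cr : CommRing R]
  [algC : Algebra ℂ R]
  [algP : Algebra (Polynomial ℂ) R]
  [tower : IsScalarTower ℂ (Polynomial ℂ) R]
  flat : Module.Flat (Polynomial ℂ) R
  general : ∀ a : ℂ, a ≠ 0 →
    Nonempty ((R ⧸ Ideal.span {algebraMap (Polynomial ℂ) R (Polynomial.X - Polynomial.C a)})
      ≃ₐ[ℂ] invariants n k l)
  special : Nonempty ((R ⧸ Ideal.span {algebraMap (Polynomial ℂ) R Polynomial.X})
      ≃ₐ[ℂ] AddMonoidAlgebra ℂ (OmegaM k l))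

/-! ### Block for Statement 17 : the real cone -/

/-- The elements of `Γ̃(k,ℓ)` as a subtype. -/
abbrev GTElt (k l : ℕ) : Type := ↥(gammaTildeSet k l)

/-- Extension by zero of a function on `Γ̃(k,ℓ)` to the ambient type. -/
def extZ (k l : ℕ) (f : GTElt k l → ℝ) : GammaAmb → ℝ :=
  fun p => if h : p ∈ gammaTildeSet k l then f ⟨p, h⟩ else 0

/-- `P_j(f)` for a real-valued function `f`. -/
def PfunR (k l : ℕ) (f : GammaAmb → ℝ) (j : ℕ) : ℝ :=
  ((∑ a ∈ Finset.Icc 1 (k + j), f (Sum.inl ((j : ℤ), a)))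
      - ∑ b ∈ Finset.Icc 1 (k + j - 1), f (Sum.inl ((j : ℤ) - 1, b)))
    + (∑ a ∈ Finset.Icc 1 k, (f (Sum.inl (-(j : ℤ), a)) - f (Sum.inl (-(j : ℤ) + 1, a))))
    + (∑ a ∈ Finset.Ico 1 j, f (Sum.inr (a, j)))
    + ∑ b ∈ Finset.Icc (j + 1) l, f (Sum.inr (j, b))

/-- The set `𝒞_{F,D,P}` of nonnegative order-preserving real functions on `Γ̃(k,ℓ)`
with `f_{-ℓ} = D`, `f_ℓ = F` and `P(f) = P`. -/
def CsetFDP (k l : ℕ) (D F : ℕ →₀ ℕ) (P : Fin l → ℕ) : Set (GTElt k l → ℝ) :=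
  {f | (∀ a b : GammaAmb, tildeGE k l a b → extZ k l f b ≤ extZ k l f a) ∧
    (∀ p, 0 ≤ f p) ∧
    (∀ a : ℕ, 1 ≤ a → a ≤ k → extZ k l f (Sum.inl (-(l : ℤ), a)) = (D (a - 1) : ℝ)) ∧
    (∀ a : ℕ, 1 ≤ a → a ≤ k + l → extZ k l f (Sum.inl ((l : ℤ), a)) = (F (a - 1) : ℝ)) ∧
    (∀ j : Fin l, PfunR k l (extZ k l f) ((j : ℕ) + 1) = (P j : ℝ))}


section Statement4Proof
open Finset

lemma downset_eq_range {s : Finset ℕ} {l : ℕ} (h : s ⊆ Finset.range l)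
    (hd : ∀ a b, a ≤ b → b ∈ s → a ∈ s) : s = Finset.range s.card := by
  ext j
  simp only [Finset.mem_range]
  constructor
  · intro hj
    have hsub : Finset.range (j + 1) ⊆ s := fun x hx =>
      hd x j (by simpa using Nat.lt_succ_iff.mp (Finset.mem_range.mp hx)) hj
    have := Finset.card_le_card hsub
    simp only [Finset.card_range] at this
    omega
  · intro hj
    by_contra hjs
    have hsub : s ⊆ Finset.range j := by
      intro x hx
      simp only [Finset.mem_range]
      by_contra hxj
      exact hjs (hd j x (by omega) hx)
    have := Finset.card_le_card hsub
    simp only [Finset.card_range] at this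
    omega

lemma downset_eq_Ico {s : Finset ℕ} {a b : ℕ} (h : s ⊆ Finset.Ico a b)
    (hd : ∀ x y, a ≤ x → x ≤ y → y ∈ s → x ∈ s) : s = Finset.Ico a (a + s.card) := by
  ext j
  simp only [Finset.mem_Ico]
  constructor
  · intro hj
    have haj : a ≤ j := (Finset.mem_Ico.mp (h hj)).1
    have hsub : Finset.Ico a (j + 1) ⊆ s := by
      intro x hx
      have hx' := Finset.mem_Ico.mp hx
      exact hd x j hx'.1 (by omega) hj
    have := Finset.card_le_card hsub
    rw [Nat.card_Ico] at this
    exact ⟨haj, by omega⟩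
  · rintro ⟨haj, hj⟩
    by_contra hjs
    have hsub : s ⊆ Finset.Ico a j := by
      intro x hx
      have hx' := Finset.mem_Ico.mp (h hx)
      refine Finset.mem_Ico.mpr ⟨hx'.1, ?_⟩
      by_contra hxj
      exact hjs (hd j x haj (by omega) hx)
    have := Finset.card_le_card hsub
    rw [Nat.card_Ico] at this
    omega

/-- For a chain `c 0 ≤ c 1 ≤ … ≤ c l` with `j < c l`, one has `c r ≤ j ↔ r < #{s<l : c s ≤ j}`. -/
lemma count_le_iff {l : ℕ} {c : ℕ → ℕ} (mono : ∀ ⦃r s : ℕ⦄, r ≤ s → s ≤ l → c r ≤ c s)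
    {j : ℕ} (hj : j < c l) {r : ℕ} (hr : r ≤ l) :
    c r ≤ j ↔ r < ((Finset.range l).filter fun s => c s ≤ j).card := by
  have hds : ((Finset.range l).filter fun s => c s ≤ j)
      = Finset.range ((Finset.range l).filter fun s => c s ≤ j).card := by
    refine downset_eq_range (Finset.filter_subset _ _) ?_
    intro a b hab hb
    simp only [Finset.mem_filter, Finset.mem_range] at hb ⊢
    exact ⟨by omega, le_trans (mono hab (by omega)) hb.2⟩
  constructor
  · intro hcr
    have hrl : r < l := by
      rcases lt_or_eq_of_le hr with h | h
      · exact h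
      · subst h; omega
    have : r ∈ (Finset.range l).filter fun s => c s ≤ j :=
      Finset.mem_filter.mpr ⟨Finset.mem_range.mpr hrl, hcr⟩
    rw [hds] at this
    exact Finset.mem_range.mp this
  · intro hrc
    have : r ∈ (Finset.range l).filter fun s => c s ≤ j := by
      rw [hds]; exact Finset.mem_range.mpr hrc
    exact (Finset.mem_filter.mp this).2

/-- from a chain of row-length functions, the associated tableau. -/
noncomputable def tabOf (E F : ℕ →₀ ℕ) (l : ℕ) (c : ℕ → ℕ → ℕ) : ℕ × ℕ → ℕ :=
  fun p => if E p.1 ≤ p.2 ∧ p.2 < F p.1 then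
    ((Finset.range l).filter fun r => c r p.1 ≤ p.2).card else 0

/-- from a tableau, the associated chain. -/
noncomputable def chainOf (E F : ℕ →₀ ℕ) (T : ℕ × ℕ → ℕ) (r i : ℕ) : ℕ :=
  E i + ((Finset.Ico (E i) (F i)).filter fun j => T (i, j) ≤ r).card

lemma chainOf_mono (E F : ℕ →₀ ℕ) (T : ℕ × ℕ → ℕ) {r s : ℕ} (h : r ≤ s) (i : ℕ) :
    chainOf E F T r i ≤ chainOf E F T s i := by
  unfold chainOf
  refine Nat.add_le_add_left (Finset.card_le_card ?_) _
  intro j hj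
  simp only [Finset.mem_filter] at hj ⊢
  exact ⟨hj.1, hj.2.trans h⟩

lemma chainOf_bot {E F : ℕ →₀ ℕ} {T : ℕ × ℕ → ℕ} {l : ℕ}
    (hent : ∀ i j, E i ≤ j → j < F i → 1 ≤ T (i, j) ∧ T (i, j) ≤ l) (i : ℕ) :
    chainOf E F T 0 i = E i := by
  unfold chainOf
  have : ((Finset.Ico (E i) (F i)).filter fun j => T (i, j) ≤ 0) = ∅ := by
    refine Finset.filter_eq_empty_iff.mpr ?_
    intro j hj
    have hj' := Finset.mem_Ico.mp hj
    have := (hent i j hj'.1 hj'.2).1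
    omega
  rw [this]; simp

lemma chainOf_top {E F : ℕ →₀ ℕ} {T : ℕ × ℕ → ℕ} {l : ℕ}
    (hEF : ∀ i, E i ≤ F i)
    (hent : ∀ i j, E i ≤ j → j < F i → 1 ≤ T (i, j) ∧ T (i, j) ≤ l) (i : ℕ) :
    chainOf E F T l i = F i := by
  unfold chainOf
  have : ((Finset.Ico (E i) (F i)).filter fun j => T (i, j) ≤ l) = Finset.Ico (E i) (F i) := by
    refine Finset.filter_true_of_mem ?_
    intro j hj
    have hj' := Finset.mem_Ico.mp hj
    exact (hent i j hj'.1 hj'.2).2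
  rw [this, Nat.card_Ico]
  have := hEF i
  omega

lemma chainOf_succ (E F : ℕ →₀ ℕ) (T : ℕ × ℕ → ℕ) (r i : ℕ) :
    chainOf E F T (r + 1) i
      = chainOf E F T r i + ((Finset.Ico (E i) (F i)).filter fun j => T (i, j) = r + 1).card := by
  unfold chainOf
  rw [add_assoc]
  congr 1
  have hu : ((Finset.Ico (E i) (F i)).filter fun j => T (i, j) ≤ r + 1)
      = ((Finset.Ico (E i) (F i)).filter fun j => T (i, j) ≤ r)
        ∪ ((Finset.Ico (E i) (F i)).filter fun j => T (i, j) = r + 1) := by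
    rw [← Finset.filter_or]
    apply Finset.filter_congr
    intro j _
    constructor <;> intro h <;> omega
  rw [hu, Finset.card_union_of_disjoint]
  rw [Finset.disjoint_filter]
  intro x _ h1 h2
  omega

/-- transitive row monotonicity -/
lemma rowMono {E F : ℕ →₀ ℕ} {T : ℕ × ℕ → ℕ} {i : ℕ}
    (hrow : ∀ j, E i ≤ j → j + 1 < F i → T (i, j) ≤ T (i, j + 1)) :
    ∀ j1 j2, E i ≤ j1 → j1 ≤ j2 → j2 < F i → T (i, j1) ≤ T (i, j2) := by
  intro j1 j2 h1 h12 h2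
  induction j2 with
  | zero =>
    have : j1 = 0 := by omega
    subst this; rfl
  | succ n ih =>
    rcases Nat.lt_or_ge j1 (n + 1) with h | h
    · exact le_trans (ih (by omega) (by omega)) (hrow n (by omega) (by omega))
    · have : j1 = n + 1 := by omega
      subst this; rfl

/-- Recovery: `chainOf (tabOf c) = c` (row-local). -/
lemma chainOf_tabOf {E F : ℕ →₀ ℕ} {l : ℕ} {c : ℕ → ℕ → ℕ} {i : ℕ}
    (mono : ∀ ⦃r s : ℕ⦄, r ≤ s → s ≤ l → c r i ≤ c s i)
    (h0 : c 0 i = E i) (hl : c l i = F i) {r : ℕ} (hr : r ≤ l) :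
    chainOf E F (tabOf E F l c) r i = c r i := by
  unfold chainOf
  have hEr : E i ≤ c r i := by rw [← h0]; exact mono (Nat.zero_le r) hr
  have hrF : c r i ≤ F i := by rw [← hl]; exact mono hr le_rfl
  have key : ((Finset.Ico (E i) (F i)).filter fun j => tabOf E F l c (i, j) ≤ r)
      = Finset.Ico (E i) (c r i) := by
    ext j
    simp only [Finset.mem_filter, Finset.mem_Ico]
    constructor
    · rintro ⟨⟨hEj, hjF⟩, htab⟩
      refine ⟨hEj, ?_⟩
      have hTj : tabOf E F l c (i, j) = ((Finset.range l).filter fun s => c s i ≤ j).card := by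
        unfold tabOf; rw [if_pos ⟨hEj, hjF⟩]
      by_contra hcr
      push_neg at hcr
      have := (count_le_iff (c := fun s => c s i) mono (by show j < c l i; omega) hr).mp hcr
      omega
    · rintro ⟨hEj, hjc⟩
      have hjF : j < F i := lt_of_lt_of_le hjc hrF
      refine ⟨⟨hEj, hjF⟩, ?_⟩
      have hTj : tabOf E F l c (i, j) = ((Finset.range l).filter fun s => c s i ≤ j).card := by
        unfold tabOf; rw [if_pos ⟨hEj, hjF⟩]
      rw [hTj]
      by_contra hcount
      push_neg at hcount
      have := (count_le_iff (c := fun s => c s i) mono (by show j < c l i; omega) hr).mpr hcount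
      omega
  rw [key, Nat.card_Ico]
  omega

/-- Recovery: `tabOf (chainOf T) = T` on the shape (row-local). -/
lemma tabOf_chainOf {E F : ℕ →₀ ℕ} {l : ℕ} {T : ℕ × ℕ → ℕ} {i : ℕ}
    (hent : ∀ j, E i ≤ j → j < F i → 1 ≤ T (i, j) ∧ T (i, j) ≤ l)
    (hrow : ∀ j, E i ≤ j → j + 1 < F i → T (i, j) ≤ T (i, j + 1))
    {j : ℕ} (hEj : E i ≤ j) (hjF : j < F i) :
    tabOf E F l (fun r i' => chainOf E F T r i') (i, j) = T (i, j) := by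
  have hmono := rowMono (E := E) (F := F) (T := T) (i := i) hrow
  have hseg : ∀ r : ℕ, ((Finset.Ico (E i) (F i)).filter fun j' => T (i, j') ≤ r)
      = Finset.Ico (E i) (E i + ((Finset.Ico (E i) (F i)).filter fun j' => T (i, j') ≤ r).card) := by
    intro r
    refine downset_eq_Ico (Finset.filter_subset _ _) ?_
    intro x y hax hxy hy
    simp only [Finset.mem_filter, Finset.mem_Ico] at hy ⊢
    refine ⟨⟨hax, by omega⟩, le_trans (hmono x y hax hxy hy.1.2) hy.2⟩
  have hkey : ∀ r : ℕ, (chainOf E F T r i ≤ j ↔ r < T (i, j)) := by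
    intro r
    unfold chainOf
    constructor
    · intro h
      by_contra hTr
      push_neg at hTr
      have hjmem : j ∈ (Finset.Ico (E i) (F i)).filter fun j' => T (i, j') ≤ r :=
        Finset.mem_filter.mpr ⟨Finset.mem_Ico.mpr ⟨hEj, hjF⟩, hTr⟩
      rw [hseg r] at hjmem
      have := (Finset.mem_Ico.mp hjmem).2
      omega
    · intro h
      by_contra hc
      push_neg at hc
      have hjmem : j ∈ Finset.Ico (E i)
          (E i + ((Finset.Ico (E i) (F i)).filter fun j' => T (i, j') ≤ r).card) :=
        Finset.mem_Ico.mpr ⟨hEj, by omega⟩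
      rw [← hseg r] at hjmem
      have := (Finset.mem_filter.mp hjmem).2
      omega
  have hTl := hent j hEj hjF
  unfold tabOf
  rw [if_pos ⟨hEj, hjF⟩]
  have : ((Finset.range l).filter fun r => chainOf E F T r i ≤ j) = Finset.range (T (i, j)) := by
    ext r
    simp only [Finset.mem_filter, Finset.mem_range]
    constructor
    · rintro ⟨_, h⟩; exact (hkey r).mp h
    · intro h; exact ⟨by omega, (hkey r).mpr h⟩
  rw [this, Finset.card_range]

/-- Column strictness of `tabOf` for an interlacing chain. -/
lemma tabOf_colstrict {E F : ℕ →₀ ℕ} {l : ℕ} {c : ℕ → ℕ → ℕ}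
    (mono : ∀ (i : ℕ) ⦃r s : ℕ⦄, r ≤ s → s ≤ l → c r i ≤ c s i)
    (inter : ∀ r i, r < l → c (r + 1) (i + 1) ≤ c r i)
    (h0 : ∀ i, c 0 i = E i) (hl : ∀ i, c l i = F i)
    {i j : ℕ} (h1 : E i ≤ j) (h2 : j < F i) (h3 : E (i + 1) ≤ j) (h4 : j < F (i + 1)) :
    tabOf E F l c (i, j) < tabOf E F l c (i + 1, j) := by
  set m := ((Finset.range l).filter fun r => c r i ≤ j).card with hm
  have hiff : ∀ {r : ℕ}, r ≤ l → (c r i ≤ j ↔ r < m) := fun {r} hr =>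
    count_le_iff (c := fun s => c s i) (mono i) (by show j < c l i; rw [hl]; exact h2) hr
  have hm1 : 1 ≤ m := (hiff (Nat.zero_le l)).mp (by rw [h0]; exact h1)
  have hml : m ≤ l := le_trans (Finset.card_le_card (Finset.filter_subset _ _))
    (by rw [Finset.card_range])
  have hmltl : m < l := by
    rcases Nat.lt_or_ge m l with h | h
    · exact h
    · exfalso
      have hmeq : m = l := by omega
      have hc1 : c (l - 1) i ≤ j := (hiff (by omega)).mpr (by omega)
      have hc2 : c l (i + 1) ≤ c (l - 1) i := by
        have := inter (l - 1) i (by omega)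
        have hll : l - 1 + 1 = l := by omega
        rwa [hll] at this
      rw [hl] at hc2
      omega
  have hsub : Finset.range (m + 1) ⊆ (Finset.range l).filter fun r => c r (i + 1) ≤ j := by
    intro r hr
    have hrm : r ≤ m := by have := Finset.mem_range.mp hr; omega
    refine Finset.mem_filter.mpr ⟨Finset.mem_range.mpr (by omega), ?_⟩
    have hcm : c m (i + 1) ≤ c (m - 1) i := by
      have := inter (m - 1) i (by omega)
      have : c (m - 1 + 1) (i + 1) ≤ c (m - 1) i := this
      have hmm : m - 1 + 1 = m := by omega
      rwa [hmm] at this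
    have hcm1 : c (m - 1) i ≤ j := (hiff (by omega)).mpr (by omega)
    calc c r (i + 1) ≤ c m (i + 1) := mono (i + 1) hrm (by omega)
      _ ≤ j := le_trans hcm hcm1
  have hcard := Finset.card_le_card hsub
  rw [Finset.card_range] at hcard
  unfold tabOf
  dsimp only
  rw [if_pos ⟨h1, h2⟩, if_pos ⟨h3, h4⟩]
  omega

/-- Interlacing of `chainOf` for a skew SSYT. -/
lemma chainOf_interlace {E F : ℕ →₀ ℕ} {T : ℕ × ℕ → ℕ}
    (hE : ∀ i, E (i + 1) ≤ E i) (hF : ∀ i, F (i + 1) ≤ F i)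
    (hrow : ∀ i j, E i ≤ j → j + 1 < F i → T (i, j) ≤ T (i, j + 1))
    (hcol : ∀ i j, E i ≤ j → j < F i → E (i + 1) ≤ j → j < F (i + 1) → T (i, j) < T (i + 1, j))
    (r i : ℕ) : chainOf E F T (r + 1) (i + 1) ≤ chainOf E F T r i := by
  set s' := (Finset.Ico (E (i + 1)) (F (i + 1))).filter fun j => T (i + 1, j) ≤ r + 1 with hs'
  have hseg : s' = Finset.Ico (E (i + 1)) (E (i + 1) + s'.card) := by
    refine downset_eq_Ico (Finset.filter_subset _ _) ?_
    intro x y hax hxy hy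
    simp only [hs', Finset.mem_filter, Finset.mem_Ico] at hy ⊢
    exact ⟨⟨hax, by omega⟩,
      le_trans (rowMono (i := i + 1) (hrow (i + 1)) x y hax hxy hy.1.2) hy.2⟩
  have hEch : E i ≤ chainOf E F T r i := Nat.le_add_right _ _
  show E (i + 1) + s'.card ≤ chainOf E F T r i
  rcases Nat.eq_zero_or_pos s'.card with hz | hpos
  · rw [hz]
    exact le_trans (by simpa using hE i) hEch
  · set j0 := E (i + 1) + s'.card - 1 with hj0
    have hj0mem : j0 ∈ s' := by
      rw [hseg]
      exact Finset.mem_Ico.mpr ⟨by omega, by omega⟩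
    simp only [hs', Finset.mem_filter, Finset.mem_Ico] at hj0mem
    obtain ⟨⟨hj0E, hj0F⟩, hj0T⟩ := hj0mem
    rcases Nat.lt_or_ge j0 (E i) with hcase | hcase
    · omega
    · have hj0Fi : j0 < F i := lt_of_lt_of_le hj0F (hF i)
      have hTij0 : T (i, j0) ≤ r := by
        have := hcol i j0 hcase hj0Fi hj0E hj0F
        omega
      have hsub : Finset.Ico (E i) (j0 + 1)
          ⊆ (Finset.Ico (E i) (F i)).filter fun j => T (i, j) ≤ r := by
        intro x hx
        have hx' := Finset.mem_Ico.mp hx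
        refine Finset.mem_filter.mpr ⟨Finset.mem_Ico.mpr ⟨hx'.1, by omega⟩, ?_⟩
        exact le_trans (rowMono (i := i) (hrow i) x j0 hx'.1 (by omega) hj0Fi) hTij0
      have := Finset.card_le_card hsub
      rw [Nat.card_Ico] at this
      unfold chainOf
      omega

/-- Entries grow down columns below row `k`. -/
lemma tab_entry_lb {E F : ℕ →₀ ℕ} {T : ℕ × ℕ → ℕ} {k : ℕ}
    (hF : ∀ i, F (i + 1) ≤ F i) (hrE : ∀ i, k ≤ i → E i = 0)
    (hent : ∀ i j, E i ≤ j → j < F i → 1 ≤ T (i, j))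
    (hcol : ∀ i j, E i ≤ j → j < F i → E (i + 1) ≤ j → j < F (i + 1) → T (i, j) < T (i + 1, j)) :
    ∀ d j, j < F (k + d) → d + 1 ≤ T (k + d, j) := by
  intro d
  induction d with
  | zero =>
    intro j hj
    exact hent k j (by rw [hrE k le_rfl]; omega) hj
  | succ n ih =>
    intro j hj
    have hj' : j < F (k + n + 1) := hj
    have hjn : j < F (k + n) := by have := hF (k + n); omega
    have h1 := ih j hjn
    have h2 := hcol (k + n) j (by rw [hrE (k+n) (by omega)]; omega) hjn
      (by rw [hrE (k+n+1) (by omega)]; omega) hj'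
    show n + 1 + 1 ≤ T (k + n + 1, j)
    omega

lemma chainOf_vanish {E F : ℕ →₀ ℕ} {T : ℕ × ℕ → ℕ} {k : ℕ}
    (hF : ∀ i, F (i + 1) ≤ F i) (hrE : ∀ i, k ≤ i → E i = 0)
    (hent : ∀ i j, E i ≤ j → j < F i → 1 ≤ T (i, j))
    (hcol : ∀ i j, E i ≤ j → j < F i → E (i + 1) ≤ j → j < F (i + 1) → T (i, j) < T (i + 1, j))
    {r i : ℕ} (hi : k + r ≤ i) : chainOf E F T r i = 0 := by
  have hEi : E i = 0 := hrE i (by omega)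
  have hfe : ((Finset.Ico (E i) (F i)).filter fun j => T (i, j) ≤ r) = ∅ := by
    refine Finset.filter_eq_empty_iff.mpr ?_
    intro j hj
    obtain ⟨hj1, hj2⟩ := Finset.mem_Ico.mp hj
    have hik : k + (i - k) = i := by omega
    have hlb := tab_entry_lb hF hrE hent hcol (i - k) j (by rw [hik]; exact hj2)
    rw [hik] at hlb
    omega
  unfold chainOf
  rw [hfe, hEi]
  simp

/-- Content of a tableau as a finite sum of row counts. -/
lemma content_ncard {E F : ℕ →₀ ℕ} {T : ℕ × ℕ → ℕ} {n : ℕ}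
    (hn : ∀ i, n ≤ i → F i = 0) (r : ℕ) :
    {p : ℕ × ℕ | E p.1 ≤ p.2 ∧ p.2 < F p.1 ∧ T p = r + 1}.ncard
      = ∑ i ∈ Finset.range n, ((Finset.Ico (E i) (F i)).filter fun j => T (i, j) = r + 1).card := by
  have hset : {p : ℕ × ℕ | E p.1 ≤ p.2 ∧ p.2 < F p.1 ∧ T p = r + 1}
      = ↑((Finset.range n).biUnion fun i =>
          ((Finset.Ico (E i) (F i)).filter fun j => T (i, j) = r + 1).image fun j => (i, j)) := by
    ext p
    simp only [Set.mem_setOf_eq, Finset.coe_biUnion, Finset.mem_coe, Finset.mem_biUnion,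
      Finset.mem_image, Finset.mem_filter, Finset.mem_Ico, Finset.mem_range, Set.mem_iUnion]
    constructor
    · rintro ⟨h1, h2, h3⟩
      refine ⟨p.1, ⟨?_, ?_⟩⟩
      · by_contra hc
        push_neg at hc
        rw [hn p.1 hc] at h2
        omega
      · exact ⟨p.2, ⟨⟨⟨h1, h2⟩, by rwa [Prod.mk.eta]⟩, Prod.mk.eta⟩⟩
    · rintro ⟨i, _, j, ⟨⟨⟨hj1, hj2⟩, hj3⟩, rfl⟩⟩
      exact ⟨hj1, hj2, hj3⟩
  rw [hset, Set.ncard_coe_finset]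
  rw [Finset.card_biUnion]
  · refine Finset.sum_congr rfl fun i _ => ?_
    rw [Finset.card_image_of_injective]
    intro a b hab
    simpa using congrArg Prod.snd hab
  · intro i _ i' _ hii'
    refine Finset.disjoint_left.mpr ?_
    rintro p hp hp'
    simp only [Finset.mem_image] at hp hp'
    obtain ⟨j, _, rfl⟩ := hp
    obtain ⟨j', _, h⟩ := hp'
    exact hii' (congrArg Prod.fst h).symm

lemma mem_omega_iff {k l : ℕ} {f : GammaAmb → ℕ} :
    f ∈ Omega k l ↔ ((∀ a b, gammaStep k l a b → f (Sum.inl b) ≤ f (Sum.inl a)) ∧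
      ∀ p, p ∉ gammaTildeSet k l → f p = 0) := by
  have hmem : f ∈ Omega k l ↔ ((∀ a b, tildeGE k l a b → f b ≤ f a) ∧
      ∀ p, p ∉ gammaTildeSet k l → f p = 0) := Iff.rfl
  rw [hmem]
  constructor
  · rintro ⟨h1, h2⟩
    refine ⟨fun a b hab => ?_, h2⟩
    exact h1 _ _ (Or.inl ⟨a, b, rfl, rfl, Relation.ReflTransGen.single hab⟩)
  · rintro ⟨h1, h2⟩
    refine ⟨?_, h2⟩
    rintro a b (⟨p, q, rfl, rfl, hpq⟩ | rfl)
    · induction hpq with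
      | refl => exact le_rfl
      | tail h hstep ih => exact le_trans (h1 _ _ hstep) ih
    · exact le_rfl

def gU (k : ℕ) (f : GammaAmb → ℕ) (r i : ℕ) : ℕ :=
  if i + 1 ≤ k + r then f (Sum.inl ((r : ℤ), i + 1)) else 0

def gL (k : ℕ) (f : GammaAmb → ℕ) (r i : ℕ) : ℕ :=
  if i + 1 ≤ k then f (Sum.inl (-(r : ℤ), i + 1)) else 0

section gUL
variable {k l : ℕ} {f : GammaAmb → ℕ}
  (hf : ∀ a b, gammaStep k l a b → f (Sum.inl b) ≤ f (Sum.inl a))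

include hf

lemma gU_mono_step (r i : ℕ) (hr : r < l) : gU k f r i ≤ gU k f (r + 1) i := by
  unfold gU
  by_cases h1 : i + 1 ≤ k + r
  · rw [if_pos h1, if_pos (by omega)]
    have := hf ((r : ℤ) + 1, i + 1) ((r : ℤ), i + 1)
      (Or.inl ⟨r, i + 1, hr, by omega, by omega, rfl, rfl⟩)
    have hc : ((r + 1 : ℕ) : ℤ) = (r : ℤ) + 1 := by push_cast; ring
    rw [hc]
    exact this
  · rw [if_neg h1]
    exact Nat.zero_le _

lemma gU_mono {r s : ℕ} (hrs : r ≤ s) (hs : s ≤ l) (i : ℕ) : gU k f r i ≤ gU k f s i := by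
  induction s with
  | zero => have : r = 0 := by omega
            subst this; rfl
  | succ n ih =>
    rcases Nat.lt_or_ge r (n + 1) with h | h
    · exact le_trans (ih (by omega) (by omega)) (gU_mono_step hf n i (by omega))
    · have : r = n + 1 := by omega
      subst this; rfl

lemma gU_interlace (r i : ℕ) (hr : r < l) : gU k f (r + 1) (i + 1) ≤ gU k f r i := by
  unfold gU
  by_cases h2 : i + 1 + 1 ≤ k + (r + 1)
  · rw [if_pos h2, if_pos (by omega)]
    have := hf ((r : ℤ), i + 1) ((r : ℤ) + 1, i + 1 + 1)
      (Or.inr (Or.inl ⟨r, i + 1, hr, by omega, by omega, rfl, by norm_num⟩))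
    have hc : ((r + 1 : ℕ) : ℤ) = (r : ℤ) + 1 := by push_cast; ring
    rw [hc]
    exact this
  · rw [if_neg h2]
    exact Nat.zero_le _

lemma gL_mono_step (r i : ℕ) (hr : r < l) : gL k f r i ≤ gL k f (r + 1) i := by
  unfold gL
  by_cases h1 : i + 1 ≤ k
  · rw [if_pos h1, if_pos h1]
    have := hf (-(r : ℤ) - 1, i + 1) (-(r : ℤ), i + 1)
      (Or.inr (Or.inr (Or.inl ⟨r, i + 1, hr, by omega, by omega, rfl, rfl⟩)))
    have hc : -((r + 1 : ℕ) : ℤ) = -(r : ℤ) - 1 := by push_cast; ring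
    rw [hc]
    exact this
  · rw [if_neg h1, if_neg h1]

lemma gL_mono {r s : ℕ} (hrs : r ≤ s) (hs : s ≤ l) (i : ℕ) : gL k f r i ≤ gL k f s i := by
  induction s with
  | zero => have : r = 0 := by omega
            subst this; rfl
  | succ n ih =>
    rcases Nat.lt_or_ge r (n + 1) with h | h
    · exact le_trans (ih (by omega) (by omega)) (gL_mono_step hf n i (by omega))
    · have : r = n + 1 := by omega
      subst this; rfl

lemma gL_interlace (r i : ℕ) (hr : r < l) : gL k f (r + 1) (i + 1) ≤ gL k f r i := by
  unfold gL
  by_cases h2 : i + 1 + 1 ≤ k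
  · rw [if_pos h2, if_pos (by omega)]
    have := hf (-(r : ℤ), i + 1) (-(r : ℤ) - 1, i + 1 + 1)
      (Or.inr (Or.inr (Or.inr ⟨r, i + 1, hr, by omega, by omega, rfl, by norm_num⟩)))
    have hc : -((r + 1 : ℕ) : ℤ) = -(r : ℤ) - 1 := by push_cast; ring
    rw [hc]
    exact this
  · rw [if_neg h2]
    exact Nat.zero_le _

end gUL

lemma sum_Icc_shift (m : ℕ) (g : ℕ → ℤ) :
    ∑ a ∈ Finset.Icc 1 m, g a = ∑ i ∈ Finset.range m, g (i + 1) := by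
  rw [← Finset.Ico_add_one_right_eq_Icc, Finset.sum_Ico_eq_sum_range]
  simp [Nat.add_comm]

lemma Afun_sum {k l : ℕ} (f : GammaAmb → ℕ) {r : ℕ} (hr : r < l) :
    Afun k f (r + 1) = ∑ i ∈ Finset.range (k + l), ((gU k f (r + 1) i : ℤ) - (gU k f r i : ℤ)) := by
  have key : ∀ s : ℕ, s ≤ l → ∑ i ∈ Finset.range (k + l), (gU k f s i : ℤ)
      = ∑ a ∈ Finset.Icc 1 (k + s), fval f (s : ℤ) a := by
    intro s hs
    rw [sum_Icc_shift]
    rw [← Finset.sum_subset (Finset.range_subset_range.mpr (by omega : k + s ≤ k + l))]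
    · refine Finset.sum_congr rfl fun i hi => ?_
      have hi' := Finset.mem_range.mp hi
      unfold gU fval
      rw [if_pos (by omega)]
    · intro i _ hi
      have hi' : ¬ (i + 1 ≤ k + s) := by
        simp only [Finset.mem_range] at hi
        omega
      unfold gU
      rw [if_neg hi']
      simp
  rw [Finset.sum_sub_distrib, key (r + 1) (by omega), key r (by omega)]
  unfold Afun
  have e1 : k + (r + 1) - 1 = k + r := by omega
  have e2 : (((r + 1 : ℕ) : ℤ)) - 1 = ((r : ℕ) : ℤ) := by push_cast; ring
  rw [e1, e2]

lemma Bfun_sum {k l : ℕ} (f : GammaAmb → ℕ) {r : ℕ} (hr : r < l) :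
    Bfun k f (r + 1) = ∑ i ∈ Finset.range (k + l), ((gL k f (r + 1) i : ℤ) - (gL k f r i : ℤ)) := by
  have key : ∀ (j : ℤ), ∑ i ∈ Finset.range (k + l),
      (((if i + 1 ≤ k then f (Sum.inl (j, i + 1)) else 0) : ℕ) : ℤ)
      = ∑ a ∈ Finset.Icc 1 k, fval f j a := by
    intro j
    rw [sum_Icc_shift]
    rw [← Finset.sum_subset (Finset.range_subset_range.mpr (by omega : k ≤ k + l))]
    · refine Finset.sum_congr rfl fun i hi => ?_
      have hi' := Finset.mem_range.mp hi
      unfold fval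
      rw [if_pos (by omega)]
    · intro i _ hi
      simp only [Finset.mem_range] at hi
      rw [if_neg (by omega)]
      simp
  have e2 : -(((r + 1 : ℕ) : ℤ)) + 1 = -((r : ℕ) : ℤ) := by push_cast; ring
  unfold Bfun
  rw [Finset.sum_sub_distrib]
  unfold gL
  rw [Finset.sum_sub_distrib, key (-((r + 1 : ℕ) : ℤ)), e2, key (-((r : ℕ) : ℤ))]

lemma inl_mem_tilde {k l : ℕ} {q : ℤ × ℕ} :
    Sum.inl q ∈ gammaTildeSet k l ↔ q ∈ gammaSet k l := by
  unfold gammaTildeSet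
  simp [Set.mem_union, Set.mem_image]

lemma inr_mem_tilde {k l : ℕ} {q : ℕ × ℕ} :
    Sum.inr q ∈ gammaTildeSet k l ↔ q ∈ epsSet l := by
  unfold gammaTildeSet
  simp [Set.mem_union, Set.mem_image]

lemma mem_gammaSet_iff {k l : ℕ} {p : ℤ × ℕ} :
    p ∈ gammaSet k l ↔ (-(l : ℤ) ≤ p.1 ∧ p.1 ≤ (l : ℤ) ∧ 1 ≤ p.2 ∧ (p.2 : ℤ) ≤ (k : ℤ) + max 0 p.1) :=
  Iff.rfl

/-- The inverse map: a pair of tableaux gives an element of `Ω`. -/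
def invF (k l : ℕ) (E D F : ℕ →₀ ℕ) (C : ℕ × ℕ → ℕ) (T₁ T₂ : ℕ × ℕ → ℕ) : GammaAmb → ℕ :=
  fun p => match p with
    | Sum.inl q => if q ∈ gammaSet k l then
        (if 0 ≤ q.1 then chainOf E F T₁ q.1.toNat (q.2 - 1)
          else chainOf E D T₂ (-q.1).toNat (q.2 - 1)) else 0
    | Sum.inr q => C q

section invF
variable {k l : ℕ} {E D F : ℕ →₀ ℕ} {C : ℕ × ℕ → ℕ} {T₁ T₂ : ℕ × ℕ → ℕ}

lemma invF_nat {r a : ℕ} (hr : r ≤ l) (ha : 1 ≤ a) (hak : a ≤ k + r) :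
    invF k l E D F C T₁ T₂ (Sum.inl ((r : ℤ), a)) = chainOf E F T₁ r (a - 1) := by
  show (if ((r : ℤ), a) ∈ gammaSet k l then
    (if (0 : ℤ) ≤ ((r : ℤ), a).1 then chainOf E F T₁ ((r : ℤ), a).1.toNat (((r : ℤ), a).2 - 1)
      else chainOf E D T₂ (-((r : ℤ), a).1).toNat (((r : ℤ), a).2 - 1)) else 0)
    = chainOf E F T₁ r (a - 1)
  rw [if_pos, if_pos (by positivity)]
  · simp
  · rw [mem_gammaSet_iff]
    refine ⟨by omega, by omega, ha, ?_⟩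
    have : max 0 ((r : ℤ)) = (r : ℤ) := by omega
    rw [this]
    push_cast
    omega

lemma invF_negnat {r a : ℕ} (hr : r ≤ l) (hr1 : 1 ≤ r) (ha : 1 ≤ a) (hak : a ≤ k) :
    invF k l E D F C T₁ T₂ (Sum.inl (-(r : ℤ), a)) = chainOf E D T₂ r (a - 1) := by
  show (if (-(r : ℤ), a) ∈ gammaSet k l then
    (if (0 : ℤ) ≤ (-(r : ℤ), a).1 then chainOf E F T₁ (-(r : ℤ), a).1.toNat ((-(r : ℤ), a).2 - 1)
      else chainOf E D T₂ (-(-(r : ℤ), a).1).toNat ((-(r : ℤ), a).2 - 1)) else 0)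
    = chainOf E D T₂ r (a - 1)
  rw [if_pos, if_neg (by simp; omega)]
  · simp
  · rw [mem_gammaSet_iff]
    refine ⟨by omega, by omega, ha, ?_⟩
    have : max 0 (-(r : ℤ)) = 0 := by omega
    rw [this]
    push_cast
    omega
end invF

section invF2
variable {k l : ℕ} {E D F : ℕ →₀ ℕ} {C : ℕ × ℕ → ℕ} {T₁ T₂ : ℕ × ℕ → ℕ}

lemma chainOfD_vanish (hrE : ∀ i, k ≤ i → E i = 0) (hrD : ∀ i, k ≤ i → D i = 0)
    {r i : ℕ} (hi : k ≤ i) : chainOf E D T₂ r i = 0 := by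
  unfold chainOf
  rw [hrE i hi, hrD i hi]
  simp

lemma gU_invF (hF : IsYoung F) (hrE : ∀ i, k ≤ i → E i = 0)
    (hent : ∀ i j, E i ≤ j → j < F i → 1 ≤ T₁ (i, j) ∧ T₁ (i, j) ≤ l)
    (hcol : ∀ i j, E i ≤ j → j < F i → E (i + 1) ≤ j → j < F (i + 1) →
      T₁ (i, j) < T₁ (i + 1, j))
    {s : ℕ} (hs : s ≤ l) (i : ℕ) :
    gU k (invF k l E D F C T₁ T₂) s i = chainOf E F T₁ s i := by
  unfold gU
  by_cases h : i + 1 ≤ k + s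
  · rw [if_pos h, invF_nat hs (by omega) h]
    simp
  · rw [if_neg h]
    exact (chainOf_vanish hF hrE (fun i j h1 h2 => (hent i j h1 h2).1) hcol (by omega)).symm

lemma gL_invF (hrE : ∀ i, k ≤ i → E i = 0) (hrD : ∀ i, k ≤ i → D i = 0)
    (hent1 : ∀ i j, E i ≤ j → j < F i → 1 ≤ T₁ (i, j) ∧ T₁ (i, j) ≤ l)
    (hent2 : ∀ i j, E i ≤ j → j < D i → 1 ≤ T₂ (i, j) ∧ T₂ (i, j) ≤ l)
    {s : ℕ} (hs : s ≤ l) (i : ℕ) :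
    gL k (invF k l E D F C T₁ T₂) s i = chainOf E D T₂ s i := by
  unfold gL
  by_cases h : i + 1 ≤ k
  · rw [if_pos h]
    rcases Nat.eq_zero_or_pos s with hz | hpos
    · subst hz
      have h0 : invF k l E D F C T₁ T₂ (Sum.inl (-((0 : ℕ) : ℤ), i + 1))
          = chainOf E F T₁ 0 (i + 1 - 1) := by
        rw [show (-((0 : ℕ) : ℤ)) = (((0 : ℕ) : ℤ)) by simp]
        exact invF_nat (by omega) (by omega) (by omega)
      rw [h0]
      simp only [Nat.add_sub_cancel]
      rw [chainOf_bot hent1, chainOf_bot hent2]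
    · rw [invF_negnat hs hpos (by omega) h]
      simp
  · rw [if_neg h]
    exact (chainOfD_vanish hrE hrD (by omega)).symm

end invF2

/-- A chain with the right properties gives a skew SSYT via `tabOf`. -/
lemma tabOf_isSSYT {E G : ℕ →₀ ℕ} {l n : ℕ} {c : ℕ → ℕ → ℕ} {M : Fin l → ℕ}
    (hl : 0 < l)
    (mono : ∀ (i : ℕ) ⦃r s : ℕ⦄, r ≤ s → s ≤ l → c r i ≤ c s i)
    (inter : ∀ r i, r < l → c (r + 1) (i + 1) ≤ c r i)
    (h0 : ∀ i, c 0 i = E i) (htop : ∀ i, c l i = G i)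
    (hn : ∀ i, n ≤ i → G i = 0)
    (hsum : ∀ r : Fin l, ∑ i ∈ Finset.range n, ((c ((r : ℕ) + 1) i : ℤ) - (c (r : ℕ) i : ℤ))
      = (M r : ℤ)) :
    IsSkewSSYT E G l M (tabOf E G l c) := by
  have hEG : ∀ i, E i ≤ G i := by
    intro i
    rw [← h0 i, ← htop i]
    exact mono i (Nat.zero_le l) le_rfl
  have hent : ∀ i j, E i ≤ j → j < G i → 1 ≤ tabOf E G l c (i, j) ∧ tabOf E G l c (i, j) ≤ l := by
    intro i j hEj hjG
    have heq : tabOf E G l c (i, j) = ((Finset.range l).filter fun r => c r i ≤ j).card := by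
      unfold tabOf
      exact if_pos ⟨hEj, hjG⟩
    constructor
    · rw [heq]
      refine Finset.card_pos.mpr ⟨0, Finset.mem_filter.mpr ⟨Finset.mem_range.mpr hl, ?_⟩⟩
      rw [h0 i]; exact hEj
    · rw [heq]
      exact le_trans (Finset.card_le_card (Finset.filter_subset _ _)) (by rw [Finset.card_range])
  refine ⟨hEG, hent, ?_, ?_, ?_, ?_⟩
  · intro i j hij
    unfold tabOf
    exact if_neg hij
  · intro i j hEj hjG
    have h1 : tabOf E G l c (i, j) = ((Finset.range l).filter fun r => c r i ≤ j).card := by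
      unfold tabOf; dsimp only; exact if_pos ⟨hEj, by omega⟩
    have h2 : tabOf E G l c (i, j + 1) = ((Finset.range l).filter fun r => c r i ≤ j + 1).card := by
      unfold tabOf; dsimp only; exact if_pos ⟨by omega, hjG⟩
    rw [h1, h2]
    refine Finset.card_le_card ?_
    intro r hr
    simp only [Finset.mem_filter] at hr ⊢
    exact ⟨hr.1, by omega⟩
  · intro i j h1 h2 h3 h4
    exact tabOf_colstrict mono inter h0 htop h1 h2 h3 h4
  · intro r
    rw [content_ncard hn]
    have hrec : ∀ {s : ℕ}, s ≤ l → ∀ i, chainOf E G (tabOf E G l c) s i = c s i := by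
      intro s hs i
      exact chainOf_tabOf (mono i) (h0 i) (htop i) hs
    have hcard : ∀ i, (((Finset.Ico (E i) (G i)).filter
        fun j => tabOf E G l c (i, j) = (r : ℕ) + 1).card : ℤ)
        = (c ((r : ℕ) + 1) i : ℤ) - (c (r : ℕ) i : ℤ) := by
      intro i
      have := chainOf_succ E G (tabOf E G l c) (r : ℕ) i
      rw [hrec (by omega : (r : ℕ) + 1 ≤ l), hrec (by omega : (r : ℕ) ≤ l)] at this
      omega
    have : ((∑ i ∈ Finset.range n, ((Finset.Ico (E i) (G i)).filter
        fun j => tabOf E G l c (i, j) = (r : ℕ) + 1).card : ℕ) : ℤ) = (M r : ℤ) := by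
      push_cast
      rw [Finset.sum_congr rfl fun i _ => hcard i]
      exact hsum r
    exact_mod_cast this

def LHSset (k l : ℕ) (E D F : ℕ →₀ ℕ) (A B : Fin l → ℕ) (C : ℕ × ℕ → ℕ) :
    Set (GammaAmb → ℕ) :=
  {f ∈ Omega k l |
    (∀ a : ℕ, 1 ≤ a → a ≤ k → f (Sum.inl (-(l : ℤ), a)) = D (a - 1)) ∧
    (∀ a : ℕ, 1 ≤ a → a ≤ k → f (Sum.inl ((0 : ℤ), a)) = E (a - 1)) ∧
    (∀ a : ℕ, 1 ≤ a → a ≤ k + l → f (Sum.inl ((l : ℤ), a)) = F (a - 1)) ∧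
    (∀ j : Fin l, Afun k f ((j : ℕ) + 1) = (A j : ℤ)) ∧
    (∀ j : Fin l, Bfun k f ((j : ℕ) + 1) = (B j : ℤ)) ∧
    (∀ p : ℕ × ℕ, f (Sum.inr p) = C p)}

section main
variable {k l : ℕ} {E D F : ℕ →₀ ℕ} {A B : Fin l → ℕ} {C : ℕ × ℕ → ℕ} {f : GammaAmb → ℕ}

lemma LHS_gU0 (hrE : ∀ i, k ≤ i → E i = 0)
    (hE0 : ∀ a : ℕ, 1 ≤ a → a ≤ k → f (Sum.inl ((0 : ℤ), a)) = E (a - 1)) (i : ℕ) :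
    gU k f 0 i = E i := by
  unfold gU
  by_cases h : i + 1 ≤ k + 0
  · rw [if_pos h, show (((0 : ℕ) : ℤ)) = (0 : ℤ) by simp, hE0 (i + 1) (by omega) (by omega)]
    simp
  · rw [if_neg h, hrE i (by omega)]

lemma LHS_gUl (hrF : ∀ i, k + l ≤ i → F i = 0)
    (hFl : ∀ a : ℕ, 1 ≤ a → a ≤ k + l → f (Sum.inl ((l : ℤ), a)) = F (a - 1)) (i : ℕ) :
    gU k f l i = F i := by
  unfold gU
  by_cases h : i + 1 ≤ k + l
  · rw [if_pos h, hFl (i + 1) (by omega) (by omega)]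
    simp
  · rw [if_neg h, hrF i (by omega)]

lemma LHS_gL0 (hrE : ∀ i, k ≤ i → E i = 0)
    (hE0 : ∀ a : ℕ, 1 ≤ a → a ≤ k → f (Sum.inl ((0 : ℤ), a)) = E (a - 1)) (i : ℕ) :
    gL k f 0 i = E i := by
  unfold gL
  by_cases h : i + 1 ≤ k
  · rw [if_pos h, show (-((0 : ℕ) : ℤ)) = (0 : ℤ) by simp, hE0 (i + 1) (by omega) (by omega)]
    simp
  · rw [if_neg h, hrE i (by omega)]

lemma LHS_gLl (hrD : ∀ i, k ≤ i → D i = 0)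
    (hDl : ∀ a : ℕ, 1 ≤ a → a ≤ k → f (Sum.inl (-(l : ℤ), a)) = D (a - 1)) (i : ℕ) :
    gL k f l i = D i := by
  unfold gL
  by_cases h : i + 1 ≤ k
  · rw [if_pos h, hDl (i + 1) (by omega) (by omega)]
    simp
  · rw [if_neg h, hrD i (by omega)]

lemma forward_mem_F (hl : 0 < l)
    (hrE : ∀ i, k ≤ i → E i = 0) (hrF : ∀ i, k + l ≤ i → F i = 0)
    (hf : f ∈ LHSset k l E D F A B C) :
    IsSkewSSYT E F l A (tabOf E F l (gU k f)) := by
  obtain ⟨hΩ, hD0, hE0, hF0, hA, hB, hC⟩ := hf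
  obtain ⟨hstep, hvan⟩ := mem_omega_iff.mp hΩ
  refine tabOf_isSSYT (n := k + l) hl (fun i r s hrs hs => gU_mono hstep hrs hs i)
    (fun r i hr => gU_interlace hstep r i hr) (LHS_gU0 hrE hE0) (LHS_gUl hrF hF0)
    hrF ?_
  intro r
  rw [← Afun_sum f r.isLt]
  exact hA r

lemma forward_mem_D (hl : 0 < l)
    (hrE : ∀ i, k ≤ i → E i = 0) (hrD : ∀ i, k ≤ i → D i = 0)
    (hf : f ∈ LHSset k l E D F A B C) :
    IsSkewSSYT E D l B (tabOf E D l (gL k f)) := by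
  obtain ⟨hΩ, hD0, hE0, hF0, hA, hB, hC⟩ := hf
  obtain ⟨hstep, hvan⟩ := mem_omega_iff.mp hΩ
  refine tabOf_isSSYT (n := k + l) hl (fun i r s hrs hs => gL_mono hstep hrs hs i)
    (fun r i hr => gL_interlace hstep r i hr) (LHS_gL0 hrE hE0) (LHS_gLl hrD hD0)
    (fun i hi => hrD i (by omega)) ?_
  intro r
  rw [← Bfun_sum f r.isLt]
  exact hB r

end main

section main2
variable {k l : ℕ} {E D F : ℕ →₀ ℕ} {A B : Fin l → ℕ} {C : ℕ × ℕ → ℕ} {T₁ T₂ : ℕ × ℕ → ℕ}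

lemma backward_mem (hk : 0 < k) (hl : 0 < l)
    (hE : IsYoung E) (hD : IsYoung D) (hF : IsYoung F)
    (hrE : ∀ i, k ≤ i → E i = 0) (hrD : ∀ i, k ≤ i → D i = 0)
    (hrF : ∀ i, k + l ≤ i → F i = 0)
    (hC : ∀ p, p ∉ epsSet l → C p = 0)
    (hT₁ : IsSkewSSYT E F l A T₁) (hT₂ : IsSkewSSYT E D l B T₂) :
    invF k l E D F C T₁ T₂ ∈ LHSset k l E D F A B C := by
  obtain ⟨hEF₁, hent₁, hzero₁, hrow₁, hcol₁, hcont₁⟩ := hT₁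
  obtain ⟨hEF₂, hent₂, hzero₂, hrow₂, hcol₂, hcont₂⟩ := hT₂
  set f' := invF k l E D F C T₁ T₂ with hf'
  have hcast : ∀ m : ℕ, ((m : ℤ) + 1) = ((m + 1 : ℕ) : ℤ) := by intro m; push_cast; ring
  have hncast : ∀ m : ℕ, (-(m : ℤ) - 1) = -((m + 1 : ℕ) : ℤ) := by intro m; push_cast; ring
  have hbot0 : ∀ i, chainOf E F T₁ 0 i = chainOf E D T₂ 0 i := by
    intro i
    rw [chainOf_bot hent₁, chainOf_bot hent₂]
  have hΩ : f' ∈ Omega k l := by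
    refine mem_omega_iff.mpr ⟨?_, ?_⟩
    · rintro a b (⟨i, j, hil, hj1, hjk, rfl, rfl⟩ | ⟨i, j, hil, hj1, hjk, rfl, rfl⟩ |
        ⟨i, j, hil, hj1, hjk, rfl, rfl⟩ | ⟨i, j, hil, hj1, hjk, rfl, rfl⟩)
      · rw [hf', hcast i, invF_nat (by omega) hj1 (by omega),
          invF_nat (by omega) hj1 (by omega)]
        exact chainOf_mono E F T₁ (by omega) (j - 1)
      · rw [hf', hcast i, invF_nat (by omega) hj1 (by omega),
          invF_nat (by omega) (by omega) (by omega)]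
        have hj : j + 1 - 1 = (j - 1) + 1 := by omega
        rw [hj]
        exact chainOf_interlace hE hF hrow₁ hcol₁ i (j - 1)
      · have hAv : f' (Sum.inl (-(i : ℤ) - 1, j)) = chainOf E D T₂ (i + 1) (j - 1) := by
          rw [hf', hncast i]
          exact invF_negnat (by omega) (by omega) hj1 hjk
        have hBv : f' (Sum.inl (-(i : ℤ), j)) = chainOf E D T₂ i (j - 1) := by
          rcases Nat.eq_zero_or_pos i with hz | hpos
          · subst hz
            rw [hf', show (-((0 : ℕ) : ℤ)) = (((0 : ℕ) : ℤ)) by simp,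
              invF_nat (by omega) hj1 (by omega)]
            exact hbot0 (j - 1)
          · rw [hf']
            exact invF_negnat (by omega) hpos hj1 hjk
        rw [hAv, hBv]
        exact chainOf_mono E D T₂ (by omega) (j - 1)
      · have hAv : f' (Sum.inl (-(i : ℤ), j)) = chainOf E D T₂ i (j - 1) := by
          rcases Nat.eq_zero_or_pos i with hz | hpos
          · subst hz
            rw [hf', show (-((0 : ℕ) : ℤ)) = (((0 : ℕ) : ℤ)) by simp,
              invF_nat (by omega) hj1 (by omega)]
            exact hbot0 (j - 1)
          · rw [hf']
            exact invF_negnat (by omega) hpos hj1 (by omega)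
        have hBv : f' (Sum.inl (-(i : ℤ) - 1, j + 1)) = chainOf E D T₂ (i + 1) ((j - 1) + 1) := by
          rw [hf', hncast i]
          have hj : j + 1 - 1 = (j - 1) + 1 := by omega
          rw [← hj]
          exact invF_negnat (by omega) (by omega) (by omega) (by omega)
        rw [hAv, hBv]
        exact chainOf_interlace hE hD hrow₂ hcol₂ i (j - 1)
    · intro p hp
      match p with
      | Sum.inl q =>
        have hq : q ∉ gammaSet k l := fun hq => hp (inl_mem_tilde.mpr hq)
        show (if q ∈ gammaSet k l then _ else 0) = 0
        rw [if_neg hq]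
      | Sum.inr q =>
        have hq : q ∉ epsSet l := fun hq => hp (inr_mem_tilde.mpr hq)
        exact hC q hq
  refine ⟨hΩ, ?_, ?_, ?_, ?_, ?_, fun p => rfl⟩
  · intro a ha hak
    rw [hf', invF_negnat le_rfl hl ha hak]
    exact chainOf_top hEF₂ hent₂ (a - 1)
  · intro a ha hak
    rw [hf', show ((0 : ℤ)) = (((0 : ℕ) : ℤ)) by simp, invF_nat (by omega) ha (by omega)]
    exact chainOf_bot hent₁ (a - 1)
  · intro a ha hak
    rw [hf', invF_nat le_rfl ha (by omega)]
    exact chainOf_top hEF₁ hent₁ (a - 1)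
  · intro j
    rw [Afun_sum f' j.isLt]
    have hsum : ∀ i ∈ Finset.range (k + l),
        ((gU k f' ((j : ℕ) + 1) i : ℤ) - (gU k f' (j : ℕ) i : ℤ))
        = (((Finset.Ico (E i) (F i)).filter fun x => T₁ (i, x) = (j : ℕ) + 1).card : ℤ) := by
      intro i _
      rw [hf', gU_invF hF hrE hent₁ hcol₁ (by omega) i,
        gU_invF hF hrE hent₁ hcol₁ (by omega) i]
      have := chainOf_succ E F T₁ (j : ℕ) i
      omega
    rw [Finset.sum_congr rfl hsum, ← Nat.cast_sum, ← content_ncard (fun i hi => hrF i hi) (j : ℕ),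
      hcont₁ j]
  · intro j
    rw [Bfun_sum f' j.isLt]
    have hsum : ∀ i ∈ Finset.range (k + l),
        ((gL k f' ((j : ℕ) + 1) i : ℤ) - (gL k f' (j : ℕ) i : ℤ))
        = (((Finset.Ico (E i) (D i)).filter fun x => T₂ (i, x) = (j : ℕ) + 1).card : ℤ) := by
      intro i _
      rw [hf', gL_invF hrE hrD hent₁ hent₂ (by omega) i,
        gL_invF hrE hrD hent₁ hent₂ (by omega) i]
      have := chainOf_succ E D T₂ (j : ℕ) i
      omega
    rw [Finset.sum_congr rfl hsum, ← Nat.cast_sum,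
      ← content_ncard (fun i hi => hrD i (by omega)) (j : ℕ), hcont₂ j]

end main2

section main3
variable {k l : ℕ} {E D F : ℕ →₀ ℕ} {A B : Fin l → ℕ} {C : ℕ × ℕ → ℕ}

lemma invF_tab_eq {f : GammaAmb → ℕ}
    (hrE : ∀ i, k ≤ i → E i = 0) (hrD : ∀ i, k ≤ i → D i = 0)
    (hrF : ∀ i, k + l ≤ i → F i = 0)
    (hf : f ∈ LHSset k l E D F A B C) :
    invF k l E D F C (tabOf E F l (gU k f)) (tabOf E D l (gL k f)) = f := by
  obtain ⟨hΩ, hD0, hE0, hF0, hA, hB, hCf⟩ := hf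
  obtain ⟨hstep, hvan⟩ := mem_omega_iff.mp hΩ
  funext p
  match p with
  | Sum.inr q => exact (hCf q).symm
  | Sum.inl q =>
    obtain ⟨i, a⟩ := q
    by_cases hq : ((i : ℤ), a) ∈ gammaSet k l
    · obtain ⟨h1, h2, h3, h4⟩ := mem_gammaSet_iff.mp hq
      simp only at h1 h2 h3 h4
      by_cases hi : (0 : ℤ) ≤ i
      · set r := i.toNat with hr
        have hir : i = (r : ℤ) := (Int.toNat_of_nonneg hi).symm
        have hrl : r ≤ l := by omega
        have hak : a ≤ k + r := by
          have hmax : max 0 i = i := by omega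
          rw [hmax] at h4
          omega
        rw [hir, invF_nat hrl h3 hak]
        have hrec := chainOf_tabOf (c := gU k f) (i := a - 1)
          (fun r' s hrs hs => gU_mono hstep hrs hs (a - 1))
          (LHS_gU0 hrE hE0 (a - 1)) (LHS_gUl hrF hF0 (a - 1)) hrl
        rw [hrec]
        unfold gU
        rw [if_pos (by omega)]
        have ha1 : a - 1 + 1 = a := by omega
        rw [ha1]
      · set r := (-i).toNat with hr
        have hir : i = -(r : ℤ) := by omega
        have hrl : r ≤ l := by omega
        have hr1 : 1 ≤ r := by omega
        have hak : a ≤ k := by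
          have hmax : max 0 i = 0 := by omega
          rw [hmax] at h4
          omega
        rw [hir, invF_negnat hrl hr1 h3 hak]
        have hrec := chainOf_tabOf (c := gL k f) (i := a - 1)
          (fun r' s hrs hs => gL_mono hstep hrs hs (a - 1))
          (LHS_gL0 hrE hE0 (a - 1)) (LHS_gLl hrD hD0 (a - 1)) hrl
        rw [hrec]
        unfold gL
        rw [if_pos (by omega)]
        have ha1 : a - 1 + 1 = a := by omega
        rw [ha1]
    · have hv : f (Sum.inl ((i : ℤ), a)) = 0 :=
        hvan _ (fun hmem => hq (inl_mem_tilde.mp hmem))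
      rw [hv]
      show (if ((i : ℤ), a) ∈ gammaSet k l then _ else 0) = 0
      rw [if_neg hq]

lemma tab_invF_F {T₁ T₂ : ℕ × ℕ → ℕ}
    (hF : IsYoung F) (hrE : ∀ i, k ≤ i → E i = 0)
    (hT₁ : IsSkewSSYT E F l A T₁) :
    tabOf E F l (gU k (invF k l E D F C T₁ T₂)) = T₁ := by
  obtain ⟨hEF₁, hent₁, hzero₁, hrow₁, hcol₁, hcont₁⟩ := hT₁
  funext p
  obtain ⟨i, j⟩ := p
  by_cases hsh : E i ≤ j ∧ j < F i
  · have h2 := tabOf_chainOf (E := E) (F := F) (l := l) (T := T₁) (i := i)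
      (fun j' => hent₁ i j') (fun j' => hrow₁ i j') hsh.1 hsh.2
    have hfe : ((Finset.range l).filter fun r => gU k (invF k l E D F C T₁ T₂) r i ≤ j)
        = ((Finset.range l).filter fun r => chainOf E F T₁ r i ≤ j) := by
      refine Finset.filter_congr fun r hr => ?_
      rw [gU_invF hF hrE hent₁ hcol₁ (le_of_lt (Finset.mem_range.mp hr)) i]
    unfold tabOf at h2 ⊢
    dsimp only at h2 ⊢
    rw [if_pos hsh] at h2 ⊢
    rw [hfe, ← h2]
  · unfold tabOf
    dsimp only
    rw [if_neg hsh, (hzero₁ i j hsh).symm]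

lemma tab_invF_D {T₁ T₂ : ℕ × ℕ → ℕ}
    (hrE : ∀ i, k ≤ i → E i = 0) (hrD : ∀ i, k ≤ i → D i = 0)
    (hT₁ : IsSkewSSYT E F l A T₁) (hT₂ : IsSkewSSYT E D l B T₂) :
    tabOf E D l (gL k (invF k l E D F C T₁ T₂)) = T₂ := by
  obtain ⟨hEF₂, hent₂, hzero₂, hrow₂, hcol₂, hcont₂⟩ := hT₂
  funext p
  obtain ⟨i, j⟩ := p
  by_cases hsh : E i ≤ j ∧ j < D i
  · have h2 := tabOf_chainOf (E := E) (F := D) (l := l) (T := T₂) (i := i)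
      (fun j' => hent₂ i j') (fun j' => hrow₂ i j') hsh.1 hsh.2
    have hfe : ((Finset.range l).filter fun r => gL k (invF k l E D F C T₁ T₂) r i ≤ j)
        = ((Finset.range l).filter fun r => chainOf E D T₂ r i ≤ j) := by
      refine Finset.filter_congr fun r hr => ?_
      rw [gL_invF hrE hrD hT₁.2.1 hent₂ (le_of_lt (Finset.mem_range.mp hr)) i]
    unfold tabOf at h2 ⊢
    dsimp only at h2 ⊢
    rw [if_pos hsh] at h2 ⊢
    rw [hfe, ← h2]
  · unfold tabOf
    dsimp only
    rw [if_neg hsh, (hzero₂ i j hsh).symm]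

end main3


end Statement4Proof

theorem statement_4 (k l : ℕ) (hk : 0 < k) (hl : 0 < l)
    (E D F : ℕ →₀ ℕ) (hE : IsYoung E) (hD : IsYoung D) (hF : IsYoung F)
    (hrE : ∀ i, k ≤ i → E i = 0) (hrD : ∀ i, k ≤ i → D i = 0)
    (hrF : ∀ i, k + l ≤ i → F i = 0)
    (A B : Fin l → ℕ) (C : ℕ × ℕ → ℕ) (hC : ∀ p, p ∉ epsSet l → C p = 0) :
    Set.ncard {f ∈ Omega k l |
      (∀ a : ℕ, 1 ≤ a → a ≤ k → f (Sum.inl (-(l : ℤ), a)) = D (a - 1)) ∧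
      (∀ a : ℕ, 1 ≤ a → a ≤ k → f (Sum.inl ((0 : ℤ), a)) = E (a - 1)) ∧
      (∀ a : ℕ, 1 ≤ a → a ≤ k + l → f (Sum.inl ((l : ℤ), a)) = F (a - 1)) ∧
      (∀ j : Fin l, Afun k f ((j : ℕ) + 1) = (A j : ℤ)) ∧
      (∀ j : Fin l, Bfun k f ((j : ℕ) + 1) = (B j : ℤ)) ∧
      (∀ p : ℕ × ℕ, f (Sum.inr p) = C p)} =
    kostka E F l A * kostka E D l B := by
  have e : (LHSset k l E D F A B C) ≃
      ({T : ℕ × ℕ → ℕ | IsSkewSSYT E F l A T} × {T : ℕ × ℕ → ℕ | IsSkewSSYT E D l B T}) :=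
    { toFun := fun f =>
        (⟨tabOf E F l (gU k f.1), forward_mem_F hl hrE hrF f.2⟩,
         ⟨tabOf E D l (gL k f.1), forward_mem_D hl hrE hrD f.2⟩)
      invFun := fun T =>
        ⟨invF k l E D F C T.1.1 T.2.1,
          backward_mem hk hl hE hD hF hrE hrD hrF hC T.1.2 T.2.2⟩
      left_inv := fun f => Subtype.ext (invF_tab_eq hrE hrD hrF f.2)
      right_inv := fun T => by
        refine Prod.ext (Subtype.ext ?_) (Subtype.ext ?_)
        · exact tab_invF_F hF hrE T.1.2
        · exact tab_invF_D hrE hrD T.1.2 T.2.2 }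
  calc Set.ncard (LHSset k l E D F A B C) = Nat.card (LHSset k l E D F A B C) := rfl
    _ = Nat.card ({T : ℕ × ℕ → ℕ | IsSkewSSYT E F l A T}
          × {T : ℕ × ℕ → ℕ | IsSkewSSYT E D l B T}) := Nat.card_congr e
    _ = Nat.card {T : ℕ × ℕ → ℕ | IsSkewSSYT E F l A T}
          * Nat.card {T : ℕ × ℕ → ℕ | IsSkewSSYT E D l B T} := Nat.card_prod _ _
    _ = kostka E F l A * kostka E D l B := rfl


end Pieri
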